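/- Let (X,d,μ) be an η-Ahlfors regular quasi-metric measure space with η > 0 and triangular constant κ ≥ 1, and let ρ be the third order hypermetric induced by d. Then for every x ∈ X and every β > 0, the integral ∬_{{(y,z) ∈ X×X : ρ(x,y,z) ≥ 1}} ρ(x,y,z)^{−β} dμ(y) dμ(z) is finite if and only if β > 2η. -/

import Mathlib

open MeasureTheory ENNReal

/-- The third order hypermetric induced by `d`:
`ρ(x,y,z) = inf_{u ∈ X} max {d(x,u), d(y,u), d(z,u)}`. -/
noncomputable def hyperRho {X : Type*} (d : X → X → ℝ) (x y z : X) : ℝ :=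
  ⨅ u : X, max (d x u) (max (d y u) (d z u))

/-- `d` is a quasi-metric on `X` with triangular constant `κ`. -/
def IsQuasiMetric {X : Type*} (d : X → X → ℝ) (κ : ℝ) : Prop :=
  (∀ x y, 0 ≤ d x y) ∧ (∀ x y, (d x y = 0 ↔ x = y)) ∧ (∀ x y, d x y = d y x) ∧
    (∀ x y z, d x z ≤ κ * (d x y + d y z))

/-- `(X,d,μ)` is `η`-Ahlfors regular with constants `a ≤ A`. -/
def IsAhlfors {X : Type*} [MeasurableSpace X] (d : X → X → ℝ) (μ : Measure X)
    (η a A : ℝ) : Prop :=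
  ∀ x : X, ∀ r : ℝ, 0 < r →
    ENNReal.ofReal (a * r ^ η) ≤ μ {y | d x y < r} ∧
      μ {y | d x y < r} ≤ ENNReal.ofReal (A * r ^ η)

/-- real algebra for the convergent direction -/
lemma st13_pow_calc (κ A η β : ℝ) (hκ : 0 < κ) (N : ℝ) :
    ((2:ℝ)^N / (2*κ))^(-β) * (A * ((2:ℝ)^(N+1))^η)^2
      = ((2*κ)^β * (A * (2:ℝ)^η)^2) * ((2:ℝ)^(2*η-β))^N := by
  have h2 : (0:ℝ) < 2 := two_pos
  have h2N : (0:ℝ) < (2:ℝ)^N := Real.rpow_pos_of_pos h2 _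
  have h2κ : (0:ℝ) < 2*κ := by linarith
  have l1 : ((2:ℝ)^N / (2*κ))^(-β) = (2:ℝ)^(N*(-β)) * (2*κ)^β := by
    rw [Real.div_rpow h2N.le h2κ.le, Real.rpow_neg h2κ.le, div_eq_mul_inv, inv_inv,
      ← Real.rpow_mul h2.le]
  have l2 : (A * ((2:ℝ)^(N+1))^η)^2
      = A^2 * (2:ℝ)^((N+1)*η + (N+1)*η) := by
    rw [mul_pow, ← Real.rpow_mul h2.le, Real.rpow_add h2]; ring
  have l3 : (A * (2:ℝ)^η)^2 = A^2 * (2:ℝ)^(η+η) := by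
    rw [mul_pow, Real.rpow_add h2]; ring
  have l4 : ((2:ℝ)^(2*η-β))^N = (2:ℝ)^((2*η-β)*N) := by
    rw [← Real.rpow_mul h2.le]
  rw [l1, l2, l3, l4]
  have comb : (2:ℝ)^(N*(-β)) * (2:ℝ)^((N+1)*η + (N+1)*η)
      = (2:ℝ)^(η+η) * (2:ℝ)^((2*η-β)*N) := by
    rw [← Real.rpow_add h2, ← Real.rpow_add h2]
    congr 1; ring
  linear_combination (A^2 * (2*κ)^β) * comb

/-- real algebra for the divergent direction -/
lemma st13_ann_calc (C a A η β : ℝ) (hC : 1 ≤ C) (ha : 0 < a) (haA : a ≤ A)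
    (hη : 0 < η) (hβ : 0 < β) (hβη : β ≤ 2*η)
    (h2A : 2*A^2/a^2 ≤ C^(2*η)) (N : ℝ) (hN : 0 ≤ N) :
    A^2 * C^(-(2*β)) ≤ (C^(N+2))^(-β) * ((a * (C^(N+2))^η)^2 - (A * (C^(N+1))^η)^2) := by
  have hC0 : (0:ℝ) < C := lt_of_lt_of_le one_pos hC
  have hA : (0:ℝ) < A := lt_of_lt_of_le ha haA
  have e1 : (C^(N+2))^(-β) = C^((N+2)*(-β)) := by rw [← Real.rpow_mul hC0.le]
  have e2 : (a * (C^(N+2))^η)^2 = a^2 * C^(((N+1)*η + (N+1)*η) + 2*η) := by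
    rw [mul_pow, ← Real.rpow_mul hC0.le, ← Real.rpow_natCast (C ^ ((N+2)*η)) 2,
      ← Real.rpow_mul hC0.le]
    congr 2; push_cast; ring
  have e3 : (A * (C^(N+1))^η)^2 = A^2 * C^((N+1)*η + (N+1)*η) := by
    rw [mul_pow, ← Real.rpow_mul hC0.le, ← Real.rpow_natCast (C ^ ((N+1)*η)) 2,
      ← Real.rpow_mul hC0.le]
    congr 2; push_cast; ring
  rw [e1, e2, e3]
  set E := (N+1)*η + (N+1)*η with hE
  have hsplit : C^(E + 2*η) = C^E * C^(2*η) := Real.rpow_add hC0 _ _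
  have hposE : (0:ℝ) < C^E := Real.rpow_pos_of_pos hC0 _
  have h2A' : 2*A^2 ≤ a^2 * C^(2*η) := by
    rw [div_le_iff₀ (by positivity)] at h2A
    nlinarith
  have inner : A^2 * C^E ≤ a^2 * C^(E + 2*η) - A^2 * C^E := by
    rw [hsplit]; nlinarith [mul_le_mul_of_nonneg_left h2A' hposE.le]
  have hpow : (0:ℝ) < C^((N+2)*(-β)) := Real.rpow_pos_of_pos hC0 _
  have step1 : C^((N+2)*(-β)) * (A^2 * C^E) ≤
      C^((N+2)*(-β)) * (a^2 * C^(E+2*η) - A^2 * C^E) :=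
    mul_le_mul_of_nonneg_left inner hpow.le
  refine le_trans ?_ step1
  have comb : C^((N+2)*(-β)) * C^E = C^((N+2)*(-β) + E) := (Real.rpow_add hC0 _ _).symm
  have expineq : -(2*β) ≤ (N+2)*(-β) + E := by
    rw [hE]; nlinarith [mul_le_mul_of_nonneg_left hβη hN]
  have final : C^(-(2*β)) ≤ C^((N+2)*(-β) + E) :=
    Real.rpow_le_rpow_of_exponent_le hC expineq
  calc A^2 * C^(-(2*β)) ≤ A^2 * C^((N+2)*(-β) + E) :=
        mul_le_mul_of_nonneg_left final (sq_nonneg A)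
    _ = C^((N+2)*(-β)) * (A^2 * C^E) := by rw [← comb]; ring

/-- `∬_{ρ(x,y,z)≥1} ρ(x,y,z)^{-β} dμ dμ` is finite if and only if `β > 2η`. -/
theorem statement13 {X : Type*} [MeasurableSpace X]
    (d : X → X → ℝ) (κ : ℝ) (hκ : 1 ≤ κ) (hqm : IsQuasiMetric d κ)
    (hd_meas : Measurable fun p : X × X => d p.1 p.2)
    (μ : Measure X) (η : ℝ) (hη : 0 < η)
    (a A : ℝ) (ha : 0 < a) (haA : a ≤ A) (hAhl : IsAhlfors d μ η a A)
    (x : X) (β : ℝ) (hβ : 0 < β) :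
    (∫⁻ p in {p : X × X | 1 ≤ hyperRho d x p.1 p.2},
        (ENNReal.ofReal (hyperRho d x p.1 p.2)) ^ (-β) ∂(μ.prod μ)) < ⊤ ↔
      2 * η < β := by
  classical
  haveI : Nonempty X := ⟨x⟩
  obtain ⟨hd0, hdeq, hdsym, hdtri⟩ := hqm
  have hκ0 : (0:ℝ) < κ := lt_of_lt_of_le one_pos hκ
  have h2κ : (0:ℝ) < 2*κ := by linarith
  have hA : (0:ℝ) < A := lt_of_lt_of_le ha haA
  have hDmeas : Measurable (fun y => d x y) := hd_meas.comp measurable_prodMk_left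
  have hmmeas : Measurable (fun p : X × X => max (d x p.1) (d x p.2)) :=
    (hDmeas.comp measurable_fst).max (hDmeas.comp measurable_snd)
  -- basic hyperRho bounds
  have hρ_nonneg : ∀ p : X × X, 0 ≤ hyperRho d x p.1 p.2 := by
    intro p
    exact le_ciInf fun u => le_trans (hd0 x u) (le_max_left _ _)
  have hρ_le : ∀ p : X × X, hyperRho d x p.1 p.2 ≤ max (d x p.1) (d x p.2) := by
    intro p
    have hb : BddBelow (Set.range fun u : X => max (d x u) (max (d p.1 u) (d p.2 u))) :=
      ⟨0, by rintro v ⟨u, rfl⟩; exact le_trans (hd0 x u) (le_max_left _ _)⟩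
    have h := ciInf_le hb x
    have hxx : d x x = 0 := (hdeq x x).mpr rfl
    calc hyperRho d x p.1 p.2 ≤ max (d x x) (max (d p.1 x) (d p.2 x)) := h
      _ = max (d x p.1) (d x p.2) := by
          rw [hxx, hdsym p.1 x, hdsym p.2 x]
          exact max_eq_right (le_max_of_le_left (hd0 x p.1))
  have hm_le : ∀ p : X × X, max (d x p.1) (d x p.2) ≤ 2*κ * hyperRho d x p.1 p.2 := by
    intro p
    have key : max (d x p.1) (d x p.2) / (2*κ) ≤ hyperRho d x p.1 p.2 := by
      apply le_ciInf
      intro u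
      rw [div_le_iff₀ h2κ]
      have hx1 : d x u ≤ max (d x u) (max (d p.1 u) (d p.2 u)) := le_max_left _ _
      have hp1 : d p.1 u ≤ max (d x u) (max (d p.1 u) (d p.2 u)) :=
        le_trans (le_max_left _ _) (le_max_right _ _)
      have hp2 : d p.2 u ≤ max (d x u) (max (d p.1 u) (d p.2 u)) :=
        le_trans (le_max_right _ _) (le_max_right _ _)
      have t1 := hdtri x u p.1
      have t2 := hdtri x u p.2
      rw [hdsym u p.1] at t1
      rw [hdsym u p.2] at t2
      apply max_le
      · nlinarith
      · nlinarith
    have := (div_le_iff₀ h2κ).mp key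
    linarith
  -- sigma-finiteness
  haveI : SigmaFinite μ := by
    refine ⟨⟨⟨fun n => {y | d x y < n+1}, fun _ => trivial, fun n => ?_, ?_⟩⟩⟩
    · exact lt_of_le_of_lt (hAhl x (n+1) (by positivity)).2 ENNReal.ofReal_lt_top
    · ext y
      simp only [Set.mem_iUnion, Set.mem_univ, iff_true, Set.mem_setOf_eq]
      obtain ⟨n, hn⟩ := exists_nat_gt (d x y)
      exact ⟨n, by linarith⟩
  -- product measure of "balls"
  have hrect : ∀ r : ℝ, (μ.prod μ) {p : X × X | max (d x p.1) (d x p.2) < r}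
      = μ {y | d x y < r} * μ {y | d x y < r} := by
    intro r
    have he : {p : X × X | max (d x p.1) (d x p.2) < r}
        = {y | d x y < r} ×ˢ {y | d x y < r} := by
      ext p
      simp [Set.mem_prod, max_lt_iff]
    rw [he, Measure.prod_prod]
  have hub2 : ∀ r : ℝ, 0 < r → (μ.prod μ) {p : X × X | max (d x p.1) (d x p.2) < r}
      ≤ ENNReal.ofReal ((A * r ^ η)^2) := by
    intro r hr
    rw [hrect, ENNReal.ofReal_pow (by positivity), sq]
    exact mul_le_mul' (hAhl x r hr).2 (hAhl x r hr).2
  have hlb2 : ∀ r : ℝ, 0 < r → ENNReal.ofReal ((a * r ^ η)^2)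
      ≤ (μ.prod μ) {p : X × X | max (d x p.1) (d x p.2) < r} := by
    intro r hr
    rw [hrect, ENNReal.ofReal_pow (by positivity), sq]
    exact mul_le_mul' (hAhl x r hr).1 (hAhl x r hr).1
  constructor
  · -- finiteness forces 2η < β ; by contradiction
    intro hI
    by_contra hc
    push_neg at hc
    -- choose the ratio C
    set C : ℝ := max (2*κ) (max 2 ((2*A^2/a^2)^((2*η)⁻¹))) with hCdef
    have hC2 : (2:ℝ) ≤ C := le_trans (le_max_left _ _) (le_max_right _ _)
    have hC1 : (1:ℝ) ≤ C := by linarith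
    have hC0 : (0:ℝ) < C := by linarith
    have hCκ : 2*κ ≤ C := le_max_left _ _
    have h2A : 2*A^2/a^2 ≤ C^(2*η) := by
      have hv : (0:ℝ) ≤ 2*A^2/a^2 := by positivity
      have hid : ((2*A^2/a^2)^((2*η)⁻¹))^(2*η) = 2*A^2/a^2 := by
        rw [← Real.rpow_mul hv, inv_mul_cancel₀ (by positivity : (2*η) ≠ 0), Real.rpow_one]
      calc 2*A^2/a^2 = ((2*A^2/a^2)^((2*η)⁻¹))^(2*η) := hid.symm
        _ ≤ C^(2*η) := Real.rpow_le_rpow (Real.rpow_nonneg hv _)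
            (le_trans (le_max_right _ _) (le_max_right _ _)) (by positivity)
    -- annuli
    set An : ℕ → Set (X × X) := fun n =>
      {p : X × X | C^((n:ℝ)+1) ≤ max (d x p.1) (d x p.2)
        ∧ max (d x p.1) (d x p.2) < C^((n:ℝ)+2)} with hAn
    have hAnmem : ∀ (n : ℕ) (p : X × X), p ∈ An n ↔
        (C^((n:ℝ)+1) ≤ max (d x p.1) (d x p.2)
          ∧ max (d x p.1) (d x p.2) < C^((n:ℝ)+2)) := by
      intro n p; rw [hAn]; rfl
    have hAnm : ∀ n : ℕ, MeasurableSet (An n) := by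
      intro n; rw [hAn]
      exact hmmeas measurableSet_Ico
    have hdisj : Pairwise (Function.onFun Disjoint An) := by
      intro i j hij
      rcases lt_or_gt_of_ne hij with h | h
      · rw [Function.onFun, Set.disjoint_left]
        intro p hpi hpj
        rw [hAnmem] at hpi; rw [hAnmem] at hpj
        have hle : C^((i:ℝ)+2) ≤ C^((j:ℝ)+1) := by
          apply Real.rpow_le_rpow_of_exponent_le hC1
          have : (i:ℝ)+1 ≤ (j:ℝ) := by exact_mod_cast h
          linarith
        linarith [hpi.2, hpj.1]
      · rw [Function.onFun, Set.disjoint_left]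
        intro p hpi hpj
        rw [hAnmem] at hpi; rw [hAnmem] at hpj
        have hle : C^((j:ℝ)+2) ≤ C^((i:ℝ)+1) := by
          apply Real.rpow_le_rpow_of_exponent_le hC1
          have : (j:ℝ)+1 ≤ (i:ℝ) := by exact_mod_cast h
          linarith
        linarith [hpi.1, hpj.2]
    have hsub : (⋃ n, An n) ⊆ {p : X × X | 1 ≤ hyperRho d x p.1 p.2} := by
      intro p hp
      obtain ⟨n, hn⟩ := Set.mem_iUnion.mp hp
      rw [hAnmem] at hn
      have h2 : 2*κ ≤ C^((n:ℝ)+1) := by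
        refine le_trans hCκ ?_
        calc C = C^(1:ℝ) := (Real.rpow_one C).symm
          _ ≤ C^((n:ℝ)+1) := Real.rpow_le_rpow_of_exponent_le hC1
              (by linarith [Nat.cast_nonneg (α := ℝ) n])
      have h3 := hm_le p
      show 1 ≤ hyperRho d x p.1 p.2
      nlinarith [hρ_nonneg p, hn.1]
    -- the constant lower bound on each annulus
    have hterm : ∀ n : ℕ, ENNReal.ofReal (A^2 * C^(-(2*β)))
        ≤ ∫⁻ p in An n, (ENNReal.ofReal (hyperRho d x p.1 p.2)) ^ (-β) ∂(μ.prod μ) := by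
      intro n
      have hr1 : (0:ℝ) < C^((n:ℝ)+1) := Real.rpow_pos_of_pos hC0 _
      have hr2 : (0:ℝ) < C^((n:ℝ)+2) := Real.rpow_pos_of_pos hC0 _
      have hpt : ∀ p ∈ An n, ENNReal.ofReal ((C^((n:ℝ)+2))^(-β))
          ≤ (ENNReal.ofReal (hyperRho d x p.1 p.2)) ^ (-β) := by
        intro p hp
        rw [hAnmem] at hp
        have hρpos : 0 < hyperRho d x p.1 p.2 := by
          nlinarith [hm_le p, hp.1]
        have hρle : hyperRho d x p.1 p.2 ≤ C^((n:ℝ)+2) :=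
          le_of_lt (lt_of_le_of_lt (hρ_le p) hp.2)
        rw [ENNReal.ofReal_rpow_of_pos hρpos]
        exact ENNReal.ofReal_le_ofReal
          (Real.rpow_le_rpow_of_nonpos hρpos hρle (neg_nonpos.mpr hβ.le))
      have hmeas2 : ENNReal.ofReal ((a * (C^((n:ℝ)+2))^η)^2 - (A * (C^((n:ℝ)+1))^η)^2)
          ≤ (μ.prod μ) (An n) := by
        rw [ENNReal.ofReal_sub _ (by positivity)]
        apply tsub_le_iff_right.mpr
        have hsub1 : {p : X × X | max (d x p.1) (d x p.2) < C^((n:ℝ)+2)}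
            ⊆ An n ∪ {p : X × X | max (d x p.1) (d x p.2) < C^((n:ℝ)+1)} := by
          intro p hp
          by_cases h : max (d x p.1) (d x p.2) < C^((n:ℝ)+1)
          · exact Or.inr h
          · exact Or.inl ((hAnmem n p).mpr ⟨not_lt.mp h, hp⟩)
        calc ENNReal.ofReal ((a * (C^((n:ℝ)+2))^η)^2)
            ≤ (μ.prod μ) {p : X × X | max (d x p.1) (d x p.2) < C^((n:ℝ)+2)} := hlb2 _ hr2
          _ ≤ (μ.prod μ) (An n)
              + (μ.prod μ) {p : X × X | max (d x p.1) (d x p.2) < C^((n:ℝ)+1)} :=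
            le_trans (measure_mono hsub1) (measure_union_le _ _)
          _ ≤ (μ.prod μ) (An n) + ENNReal.ofReal ((A * (C^((n:ℝ)+1))^η)^2) :=
            add_le_add_right (hub2 _ hr1) _
      calc ENNReal.ofReal (A^2 * C^(-(2*β)))
          ≤ ENNReal.ofReal ((C^((n:ℝ)+2))^(-β)
              * ((a * (C^((n:ℝ)+2))^η)^2 - (A * (C^((n:ℝ)+1))^η)^2)) := by
            apply ENNReal.ofReal_le_ofReal
            exact st13_ann_calc C a A η β hC1 ha haA hη hβ hc h2A (n:ℝ) (Nat.cast_nonneg n)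
        _ = ENNReal.ofReal ((C^((n:ℝ)+2))^(-β))
            * ENNReal.ofReal ((a * (C^((n:ℝ)+2))^η)^2 - (A * (C^((n:ℝ)+1))^η)^2) :=
            ENNReal.ofReal_mul (by positivity)
        _ ≤ ENNReal.ofReal ((C^((n:ℝ)+2))^(-β)) * (μ.prod μ) (An n) :=
            mul_le_mul_right hmeas2 _
        _ = ∫⁻ _ in An n, ENNReal.ofReal ((C^((n:ℝ)+2))^(-β)) ∂(μ.prod μ) :=
            (setLIntegral_const _ _).symm
        _ ≤ ∫⁻ p in An n, (ENNReal.ofReal (hyperRho d x p.1 p.2)) ^ (-β) ∂(μ.prod μ) :=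
            setLIntegral_mono' (hAnm n) hpt
    have hεpos : (0:ℝ) < A^2 * C^(-(2*β)) :=
      mul_pos (pow_pos hA 2) (Real.rpow_pos_of_pos hC0 _)
    have htop : (⊤:ℝ≥0∞) ≤ ∫⁻ p in {p : X × X | 1 ≤ hyperRho d x p.1 p.2},
        (ENNReal.ofReal (hyperRho d x p.1 p.2)) ^ (-β) ∂(μ.prod μ) := by
      calc (⊤:ℝ≥0∞) = ∑' _ : ℕ, ENNReal.ofReal (A^2 * C^(-(2*β))) :=
            (ENNReal.tsum_const_eq_top_of_ne_zero
              (ne_of_gt (ENNReal.ofReal_pos.mpr hεpos))).symm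
        _ ≤ ∑' n, ∫⁻ p in An n, (ENNReal.ofReal (hyperRho d x p.1 p.2)) ^ (-β) ∂(μ.prod μ) :=
            ENNReal.tsum_le_tsum hterm
        _ = ∫⁻ p in ⋃ n, An n,
              (ENNReal.ofReal (hyperRho d x p.1 p.2)) ^ (-β) ∂(μ.prod μ) :=
            (lintegral_iUnion hAnm hdisj _).symm
        _ ≤ _ := lintegral_mono' (Measure.restrict_mono hsub le_rfl) le_rfl
    exact absurd hI (by simp [top_le_iff.mp htop])
  · -- convergence when 2η < β
    intro hβη
    have hST : {p : X × X | 1 ≤ hyperRho d x p.1 p.2}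
        ⊆ {p : X × X | (1:ℝ) ≤ max (d x p.1) (d x p.2)} :=
      fun p hp => le_trans hp (hρ_le p)
    set Tn : ℕ → Set (X × X) := fun n =>
      {p : X × X | (2:ℝ)^((n:ℝ)) ≤ max (d x p.1) (d x p.2)
        ∧ max (d x p.1) (d x p.2) < (2:ℝ)^((n:ℝ)+1)} with hTn
    have hTnmem : ∀ (n : ℕ) (p : X × X), p ∈ Tn n ↔
        ((2:ℝ)^((n:ℝ)) ≤ max (d x p.1) (d x p.2)
          ∧ max (d x p.1) (d x p.2) < (2:ℝ)^((n:ℝ)+1)) := by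
      intro n p; rw [hTn]; rfl
    have hTnm : ∀ n : ℕ, MeasurableSet (Tn n) := by
      intro n; rw [hTn]
      exact hmmeas measurableSet_Ico
    have hcover : {p : X × X | (1:ℝ) ≤ max (d x p.1) (d x p.2)} ⊆ ⋃ n, Tn n := by
      intro p hp
      have hp' : (1:ℝ) ≤ max (d x p.1) (d x p.2) := hp
      have hex : ∃ k : ℕ, max (d x p.1) (d x p.2) < 2^k :=
        pow_unbounded_of_one_lt _ one_lt_two
      have hn0 : max (d x p.1) (d x p.2) < 2^(Nat.find hex) := Nat.find_spec hex
      have hn0pos : Nat.find hex ≠ 0 := by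
        intro h
        rw [h] at hn0
        simp only [pow_zero] at hn0
        linarith
      obtain ⟨n, hn⟩ := Nat.exists_eq_succ_of_ne_zero hn0pos
      have hmin : ¬ (max (d x p.1) (d x p.2) < 2^n) :=
        Nat.find_min hex (by omega)
      refine Set.mem_iUnion.mpr ⟨n, (hTnmem n p).mpr ⟨?_, ?_⟩⟩
      · rw [Real.rpow_natCast]
        exact not_lt.mp hmin
      · have hcast : ((n:ℝ)+1) = ((n+1 : ℕ) : ℝ) := by push_cast; ring
        rw [hcast, Real.rpow_natCast]
        rw [hn] at hn0
        exact hn0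
    have hterm : ∀ n : ℕ,
        (∫⁻ p in Tn n, (ENNReal.ofReal (hyperRho d x p.1 p.2)) ^ (-β) ∂(μ.prod μ))
          ≤ ENNReal.ofReal ((2*κ)^β * (A * (2:ℝ)^η)^2)
              * (ENNReal.ofReal ((2:ℝ)^(2*η-β)))^n := by
      intro n
      have hu : (0:ℝ) < (2:ℝ)^((n:ℝ)) / (2*κ) := by positivity
      have hr2 : (0:ℝ) < (2:ℝ)^((n:ℝ)+1) := Real.rpow_pos_of_pos two_pos _
      have hpt : ∀ p ∈ Tn n, (ENNReal.ofReal (hyperRho d x p.1 p.2)) ^ (-β)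
          ≤ ENNReal.ofReal (((2:ℝ)^((n:ℝ)) / (2*κ))^(-β)) := by
        intro p hp
        rw [hTnmem] at hp
        have hρpos : 0 < hyperRho d x p.1 p.2 := by
          nlinarith [hm_le p, hp.1, Real.rpow_pos_of_pos (two_pos (α := ℝ)) ((n:ℝ))]
        have hul : (2:ℝ)^((n:ℝ)) / (2*κ) ≤ hyperRho d x p.1 p.2 := by
          rw [div_le_iff₀ h2κ]
          nlinarith [hm_le p, hp.1]
        rw [ENNReal.ofReal_rpow_of_pos hρpos]
        exact ENNReal.ofReal_le_ofReal
          (Real.rpow_le_rpow_of_nonpos hu hul (neg_nonpos.mpr hβ.le))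
      have hTsubball : Tn n ⊆ {p : X × X | max (d x p.1) (d x p.2) < (2:ℝ)^((n:ℝ)+1)} :=
        fun p hp => ((hTnmem n p).mp hp).2
      calc (∫⁻ p in Tn n, (ENNReal.ofReal (hyperRho d x p.1 p.2)) ^ (-β) ∂(μ.prod μ))
          ≤ ∫⁻ _ in Tn n, ENNReal.ofReal (((2:ℝ)^((n:ℝ)) / (2*κ))^(-β)) ∂(μ.prod μ) :=
            setLIntegral_mono' (hTnm n) hpt
        _ = ENNReal.ofReal (((2:ℝ)^((n:ℝ)) / (2*κ))^(-β)) * (μ.prod μ) (Tn n) :=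
            setLIntegral_const _ _
        _ ≤ ENNReal.ofReal (((2:ℝ)^((n:ℝ)) / (2*κ))^(-β))
            * ENNReal.ofReal ((A * ((2:ℝ)^((n:ℝ)+1))^η)^2) :=
            mul_le_mul_right (le_trans (measure_mono hTsubball) (hub2 _ hr2)) _
        _ = ENNReal.ofReal (((2:ℝ)^((n:ℝ)) / (2*κ))^(-β)
            * (A * ((2:ℝ)^((n:ℝ)+1))^η)^2) := (ENNReal.ofReal_mul (by positivity)).symm
        _ = ENNReal.ofReal ((2*κ)^β * (A * (2:ℝ)^η)^2)
            * (ENNReal.ofReal ((2:ℝ)^(2*η-β)))^n := by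
            rw [st13_pow_calc κ A η β hκ0 (n:ℝ), Real.rpow_natCast ((2:ℝ)^(2*η-β)) n,
              ENNReal.ofReal_mul (by positivity), ENNReal.ofReal_pow (by positivity)]
    have hrlt1 : ENNReal.ofReal ((2:ℝ)^(2*η-β)) < 1 := by
      rw [← ENNReal.ofReal_one]
      exact ENNReal.ofReal_lt_ofReal_iff_of_nonneg (by positivity) |>.mpr
        (Real.rpow_lt_one_of_one_lt_of_neg one_lt_two (by linarith))
    calc (∫⁻ p in {p : X × X | 1 ≤ hyperRho d x p.1 p.2},
            (ENNReal.ofReal (hyperRho d x p.1 p.2)) ^ (-β) ∂(μ.prod μ))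
        ≤ ∫⁻ p in {p : X × X | (1:ℝ) ≤ max (d x p.1) (d x p.2)},
            (ENNReal.ofReal (hyperRho d x p.1 p.2)) ^ (-β) ∂(μ.prod μ) :=
          lintegral_mono' (Measure.restrict_mono hST le_rfl) le_rfl
      _ ≤ ∫⁻ p in ⋃ n, Tn n,
            (ENNReal.ofReal (hyperRho d x p.1 p.2)) ^ (-β) ∂(μ.prod μ) :=
          lintegral_mono' (Measure.restrict_mono hcover le_rfl) le_rfl
      _ ≤ ∑' n, ∫⁻ p in Tn n,
            (ENNReal.ofReal (hyperRho d x p.1 p.2)) ^ (-β) ∂(μ.prod μ) :=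
          lintegral_iUnion_le _ _
      _ ≤ ∑' n, ENNReal.ofReal ((2*κ)^β * (A * (2:ℝ)^η)^2)
            * (ENNReal.ofReal ((2:ℝ)^(2*η-β)))^n :=
          ENNReal.tsum_le_tsum hterm
      _ = ENNReal.ofReal ((2*κ)^β * (A * (2:ℝ)^η)^2)
            * ∑' n, (ENNReal.ofReal ((2:ℝ)^(2*η-β)))^n := ENNReal.tsum_mul_left
      _ = ENNReal.ofReal ((2*κ)^β * (A * (2:ℝ)^η)^2)
            * (1 - ENNReal.ofReal ((2:ℝ)^(2*η-β)))⁻¹ := by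
          rw [ENNReal.tsum_geometric]
      _ < ⊤ := by
          apply ENNReal.mul_lt_top ENNReal.ofReal_lt_top
          exact ENNReal.inv_lt_top.mpr (tsub_pos_of_lt hrlt1)
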